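/- (From E-expansion to the associated polynomial, Proposition 3.5) Let g₀,…,g_ℓ : Ω → L be such that each g_i is modular of weight k−2i and type m−i for Γ (i.e. g_i |_{k−2i,m−i} γ = g_i for all γ ∈ Γ), and set f := Σ_{h=0}^{ℓ} g_h·E^h. Then f is quasi-modular of weight k, type m and depth ≤ ℓ for Γ with coefficient family (f₀,…,f_ℓ) given by f_i = (−π)^{−i} · Σ_{h=i}^{ℓ} (h choose i) g_h·E^{h−i}. -/
import Mathlib


noncomputable section

namespace DrinfeldQM

variable {L : Type*} [Field L]

/-- Entry `(i,j)` of `γ ∈ GL₂(F)`, viewed inside `L`. -/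
def Mc (F : Subfield L) (γ : GL (Fin 2) F) (i j : Fin 2) : L :=
  ((γ : Matrix (Fin 2) (Fin 2) F) i j : L)

/-- Determinant of `γ ∈ GL₂(F)`, viewed inside `L`. -/
def detL (F : Subfield L) (γ : GL (Fin 2) F) : L :=
  ((γ : Matrix (Fin 2) (Fin 2) F).det : L)

/-- Automorphy factor `cz + d`. -/
def jf (F : Subfield L) (γ : GL (Fin 2) F) (z : L) : L :=
  Mc F γ 1 0 * z + Mc F γ 1 1

/-- Fractional linear action of `GL₂(F)` on `L` (restricting to `Ω`). -/
def act (F : Subfield L) (γ : GL (Fin 2) F) (z : L) : L :=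
  (Mc F γ 0 0 * z + Mc F γ 0 1) / jf F γ z

/-- The Drinfeld upper half plane `Ω = L ∖ F`. -/
def Omega (F : Subfield L) : Set L := {z | z ∉ F}

/-- The slash operator `f |_{k,m} γ` of weight `k` and type `m`. -/
def slash (F : Subfield L) (k m : ℤ) (f : L → L) (γ : GL (Fin 2) F) : L → L :=
  fun z => detL F γ ^ m * jf F γ z ^ (-k) * f (act F γ z)

/-- `f` is quasi-modular of weight `k`, type `m` and depth `≤ ℓ` for the set `S ⊆ GL₂(F)`
with coefficient family `fam` (only the indices `0,…,ℓ` of `fam` are relevant). -/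
def IsQM (F : Subfield L) (S : Set (GL (Fin 2) F)) (k m : ℤ) (ℓ : ℕ)
    (f : L → L) (fam : ℕ → L → L) : Prop :=
  Set.EqOn (fam 0) f (Omega F) ∧
    ∀ γ ∈ S, ∀ z ∈ Omega F,
      slash F k m f γ z =
        ∑ i ∈ Finset.range (ℓ + 1), fam i z * (Mc F γ 1 0 / jf F γ z) ^ i

/-- The coefficient family of the `i`-th coefficient `f_i` of a quasi-modular function with
coefficient family `fam`:  `(f_i)_h = ((h+i) choose i) · f_{h+i}`. -/
def shiftFam (i : ℕ) (fam : ℕ → L → L) : ℕ → L → L :=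
  fun h z => ((h + i).choose i : L) * fam (h + i) z

/-- The double-slash operator `f ∥_{k,m} γ` of a quasi-modular function of depth `≤ ℓ` with
coefficient family `fam`. -/
def dslash (F : Subfield L) (k m : ℤ) (ℓ : ℕ) (fam : ℕ → L → L)
    (γ : GL (Fin 2) F) : L → L :=
  fun z => ∑ i ∈ Finset.range (ℓ + 1),
    (-(Mc F γ 1 0) / jf F γ z) ^ i * detL F γ ^ (m - (i : ℤ)) *
      jf F γ z ^ (2 * (i : ℤ) - k) * fam i (act F γ z)

/-- The double-slash operator on polynomial-valued functions `P : Ω → L[X]`: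
`(P ∥_{k,m} γ)(z, X) = (det γ)^m (cz+d)^{-k} P(γ·z, ((cz+d)²/det γ)(X - c/(cz+d)))`. -/
def pdslash (F : Subfield L) (k m : ℤ) (P : L → Polynomial L)
    (γ : GL (Fin 2) F) : L → Polynomial L :=
  fun z =>
    Polynomial.C (detL F γ ^ m * jf F γ z ^ (-k)) *
      (P (act F γ z)).comp
        (Polynomial.C (jf F γ z ^ 2 / detL F γ) *
          (Polynomial.X - Polynomial.C (Mc F γ 1 0 / jf F γ z)))

/-- The associated polynomial `P_f(z, X) = ∑_{i=0}^{ℓ} f_i(z) Xⁱ`. -/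
def assocPoly (ℓ : ℕ) (fam : ℕ → L → L) : L → Polynomial L :=
  fun z => ∑ i ∈ Finset.range (ℓ + 1), Polynomial.C (fam i z) * Polynomial.X ^ i

/-- `E` satisfies the functional equation of the false Eisenstein series (weight 2, type 1,
depth 1, coefficient family `(E, -π⁻¹)`) for all `γ ∈ S`. -/
def EFunEq (F : Subfield L) (S : Set (GL (Fin 2) F)) (π : L) (E : L → L) : Prop :=
  ∀ γ ∈ S, ∀ z ∈ Omega F,
    E (act F γ z) =
      (detL F γ)⁻¹ * jf F γ z ^ 2 * (E z - Mc F γ 1 0 / (π * jf F γ z))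



lemma tri_swap {M : Type*} [AddCommMonoid M] (n : ℕ) (f : ℕ → ℕ → M) :
    ∑ h ∈ Finset.range (n+1), ∑ i ∈ Finset.range (h+1), f h i
      = ∑ i ∈ Finset.range (n+1), ∑ h ∈ Finset.range (n - i + 1), f (h + i) i := by
  induction n with
  | zero => simp
  | succ n ih =>
    rw [Finset.sum_range_succ, ih, Finset.sum_range_succ
      (fun i => ∑ h ∈ Finset.range (n + 1 - i + 1), f (h + i) i) (n+1)]
    have h1 : ∀ i ∈ Finset.range (n+1),
        ∑ h ∈ Finset.range (n + 1 - i + 1), f (h + i) i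
          = (∑ h ∈ Finset.range (n - i + 1), f (h + i) i) + f (n+1) i := by
      intro i hi
      have hi' : i ≤ n := Nat.lt_succ_iff.mp (Finset.mem_range.mp hi)
      have e : n + 1 - i + 1 = (n - i + 1) + 1 := by omega
      rw [e, Finset.sum_range_succ]
      congr 2
      omega
    rw [Finset.sum_congr rfl h1, Finset.sum_add_distrib,
      Finset.sum_range_succ (fun i => f (n+1) i)]
    simp [add_assoc]

lemma detL_eq {L : Type*} [Field L] (F : Subfield L) (γ : GL (Fin 2) F) :
    detL F γ = Mc F γ 0 0 * Mc F γ 1 1 - Mc F γ 0 1 * Mc F γ 1 0 := by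
  rw [detL, Matrix.det_fin_two]
  push_cast
  rfl

lemma detL_ne_zero {L : Type*} [Field L] (F : Subfield L) (γ : GL (Fin 2) F) :
    detL F γ ≠ 0 := by
  have hu : IsUnit (γ : Matrix (Fin 2) (Fin 2) F).det :=
    (Matrix.isUnit_iff_isUnit_det _).mp γ.isUnit
  simp only [detL, ne_eq, ZeroMemClass.coe_eq_zero]
  exact hu.ne_zero

lemma jf_ne_zero {L : Type*} [Field L] (F : Subfield L) (γ : GL (Fin 2) F)
    {z : L} (hz : z ∈ Omega F) : jf F γ z ≠ 0 := by
  intro h0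
  rw [jf] at h0
  by_cases hc : Mc F γ 1 0 = 0
  · have hd : Mc F γ 1 1 = 0 := by rw [hc, zero_mul, zero_add] at h0; exact h0
    exact detL_ne_zero F γ (by rw [detL_eq, hd, hc]; ring)
  · apply hz
    have hzz : z = -Mc F γ 1 1 / Mc F γ 1 0 := by
      rw [eq_div_iff hc]
      linear_combination h0
    rw [hzz]
    exact F.div_mem (F.neg_mem (SetLike.coe_mem _)) (SetLike.coe_mem _)

/-- From the E-expansion to the associated polynomial (Proposition 3.5):
if each `gᵢ` is modular of weight `k-2i` and type `m-i`, then `f = ∑ g_h E^h` is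
quasi-modular with coefficient family `fᵢ = (-π)^{-i} ∑_{h=i}^{ℓ} (h choose i) g_h E^{h-i}`. -/
theorem E_expansion_to_assocPoly
    {L : Type*} [Field L] (F : Subfield L) (Γ : Subgroup (GL (Fin 2) F))
    (π : L) (hπ : π ≠ 0) (E : L → L)
    (hE : EFunEq F (Γ : Set (GL (Fin 2) F)) π E)
    (k m : ℤ) (ℓ : ℕ) (g : ℕ → L → L)
    (hg : ∀ i ≤ ℓ, ∀ γ ∈ Γ, ∀ z ∈ Omega F,
      slash F (k - 2 * (i : ℤ)) (m - (i : ℤ)) (g i) γ z = g i z) :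
    IsQM F (Γ : Set (GL (Fin 2) F)) k m ℓ
      (fun z => ∑ h ∈ Finset.range (ℓ + 1), g h z * E z ^ h)
      (fun i z => (-π) ^ (-(i : ℤ)) *
        ∑ h ∈ Finset.range (ℓ - i + 1), ((h + i).choose i : L) * g (h + i) z * E z ^ h) := by
  constructor
  · intro z hz
    simp [Finset.mul_sum]
  · intro γ hγ z hz
    have hj : jf F γ z ≠ 0 := jf_ne_zero F γ hz
    have hD : detL F γ ≠ 0 := detL_ne_zero F γ
    have hgact : ∀ h ≤ ℓ, g h (act F γ z)
        = detL F γ ^ ((h : ℤ) - m) * jf F γ z ^ (k - 2 * (h : ℤ)) * g h z := by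
      intro h hh
      have hthis := hg h hh γ hγ z hz
      rw [slash] at hthis
      have key : detL F γ ^ ((h : ℤ) - m) * detL F γ ^ (m - (h : ℤ)) *
          (jf F γ z ^ (k - 2 * (h : ℤ)) * jf F γ z ^ (-(k - 2 * (h : ℤ)))) = 1 := by
        rw [← zpow_add₀ hD, ← zpow_add₀ hj]
        norm_num
      calc g h (act F γ z)
          = detL F γ ^ ((h : ℤ) - m) * detL F γ ^ (m - (h : ℤ)) *
              (jf F γ z ^ (k - 2 * (h : ℤ)) * jf F γ z ^ (-(k - 2 * (h : ℤ)))) *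
              g h (act F γ z) := by rw [key, one_mul]
        _ = detL F γ ^ ((h : ℤ) - m) * jf F γ z ^ (k - 2 * (h : ℤ)) *
              (detL F γ ^ (m - (h : ℤ)) * jf F γ z ^ (-(k - 2 * (h : ℤ))) *
                g h (act F γ z)) := by ring
        _ = detL F γ ^ ((h : ℤ) - m) * jf F γ z ^ (k - 2 * (h : ℤ)) * g h z := by
              rw [hthis]
    have hEact : E (act F γ z) = (detL F γ)⁻¹ * jf F γ z ^ 2 *
        (E z - Mc F γ 1 0 / (π * jf F γ z)) := hE γ hγ z hz
    rw [slash]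
    beta_reduce
    rw [Finset.mul_sum]
    have step1 : ∀ h ∈ Finset.range (ℓ + 1),
        detL F γ ^ m * jf F γ z ^ (-k) * (g h (act F γ z) * E (act F γ z) ^ h)
          = g h z * (E z - Mc F γ 1 0 / (π * jf F γ z)) ^ h := by
      intro h hh
      have hh' : h ≤ ℓ := Nat.lt_succ_iff.mp (Finset.mem_range.mp hh)
      rw [hgact h hh', hEact, mul_pow, mul_pow, ← pow_mul, inv_pow,
        ← zpow_natCast (detL F γ) h, ← zpow_neg, ← zpow_natCast (jf F γ z) (2 * h)]
      have hcast : ((2 * h : ℕ) : ℤ) = 2 * (h : ℤ) := by push_cast; ring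
      rw [hcast]
      rw [show detL F γ ^ m * jf F γ z ^ (-k) *
            (detL F γ ^ ((h : ℤ) - m) * jf F γ z ^ (k - 2 * (h : ℤ)) * g h z *
              (detL F γ ^ (-(h : ℤ)) * jf F γ z ^ (2 * (h : ℤ)) *
                (E z - Mc F γ 1 0 / (π * jf F γ z)) ^ h))
          = detL F γ ^ m * detL F γ ^ ((h : ℤ) - m) * detL F γ ^ (-(h : ℤ)) *
            (jf F γ z ^ (-k) * jf F γ z ^ (k - 2 * (h : ℤ)) * jf F γ z ^ (2 * (h : ℤ))) *
            (g h z * (E z - Mc F γ 1 0 / (π * jf F γ z)) ^ h) by ring]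
      rw [← zpow_add₀ hD, ← zpow_add₀ hD, ← zpow_add₀ hj, ← zpow_add₀ hj]
      rw [show m + ((h : ℤ) - m) + -(h : ℤ) = 0 by ring,
        show -k + (k - 2 * (h : ℤ)) + 2 * (h : ℤ) = 0 by ring]
      rw [zpow_zero, zpow_zero, one_mul, one_mul]
    rw [Finset.sum_congr rfl step1]
    have expand2 : ∑ h ∈ Finset.range (ℓ + 1),
          g h z * (E z - Mc F γ 1 0 / (π * jf F γ z)) ^ h
        = ∑ h ∈ Finset.range (ℓ + 1), ∑ i ∈ Finset.range (h + 1),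
            g h z * ((-(Mc F γ 1 0 / (π * jf F γ z))) ^ i * E z ^ (h - i) *
              (h.choose i : L)) := by
      apply Finset.sum_congr rfl
      intro h _
      rw [sub_eq_neg_add, add_pow, Finset.mul_sum]
    rw [expand2, tri_swap ℓ (fun h i => g h z *
        ((-(Mc F γ 1 0 / (π * jf F γ z))) ^ i * E z ^ (h - i) * (h.choose i : L)))]
    apply Finset.sum_congr rfl
    intro i hi
    rw [Finset.mul_sum, Finset.sum_mul]
    apply Finset.sum_congr rfl
    intro h hh
    have e2 : (-(Mc F γ 1 0 / (π * jf F γ z))) ^ i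
        = (-π) ^ (-(i : ℤ)) * (Mc F γ 1 0 / jf F γ z) ^ i := by
      rw [zpow_neg, zpow_natCast, ← inv_pow, ← mul_pow]
      congr 1
      field_simp
    simp only [Nat.add_sub_cancel]
    rw [e2]
    ring


end DrinfeldQM
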